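/- Given positive semidefinite R ∈ ℂ^{M×M} and a vector σ ∈ ℝ^M with strictly positive entries, for any y ∈ ℂ^M in the range of R + diag(σ): y^H (R + diag(σ))^{-1} y = min over z ∈ ℂ^M of [ z^H R⁺ z + (y−z)^H diag(σ)^{-1} (y−z) ], where the minimum over z is restricted to z in the range of R. -/

import Mathlib

open Matrix ComplexOrder Classical

/-- Moore–Penrose pseudoinverse, defined via the Penrose conditions. -/
noncomputable def pinv {n : Type*} [Fintype n] [DecidableEq n] (A : Matrix n n ℂ) :
    Matrix n n ℂ :=
  if h : ∃ B : Matrix n n ℂ,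
      A * B * A = A ∧ B * A * B = B ∧ (A * B)ᴴ = A * B ∧ (B * A)ᴴ = B * A
  then h.choose else 0

lemma exists_penrose {n : Type*} [Fintype n] [DecidableEq n] {A : Matrix n n ℂ}
    (hA : A.IsHermitian) : ∃ B : Matrix n n ℂ,
      A * B * A = A ∧ B * A * B = B ∧ (A * B)ᴴ = A * B ∧ (B * A)ᴴ = B * A := by
  set U := (hA.eigenvectorUnitary : Matrix n n ℂ) with hUdef
  have hU2 : star U * U = 1 := (Matrix.mem_unitaryGroup_iff').mp hA.eigenvectorUnitary.2
  set d : n → ℂ := RCLike.ofReal ∘ hA.eigenvalues with hd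
  have key : ∀ f g : n → ℂ, (U * diagonal f * star U) * (U * diagonal g * star U)
      = (U * diagonal fun i => f i * g i) * star U := by
    intro f g
    calc (U * diagonal f * star U) * (U * diagonal g * star U)
        = U * (diagonal f * ((star U * U) * (diagonal g * star U))) := by
          simp only [Matrix.mul_assoc]
      _ = U * (diagonal f * (diagonal g * star U)) := by rw [hU2, one_mul]
      _ = (U * diagonal fun i => f i * g i) * star U := by
          simp only [← Matrix.mul_assoc, diagonal_mul_diagonal]
  have hspec : A = U * diagonal d * star U := hA.spectral_theorem
  have hstard : ∀ i, star (d i) = d i := by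
    intro i
    simp [hd, RCLike.star_def, Complex.conj_ofReal]
  have herm : ∀ f : n → ℂ, star f = f →
      (U * diagonal f * star U)ᴴ = U * diagonal f * star U := by
    intro f hf
    have h1 : (star U)ᴴ = U := by
      rw [Matrix.star_eq_conjTranspose, conjTranspose_conjTranspose]
    rw [conjTranspose_mul, conjTranspose_mul, h1, diagonal_conjTranspose, hf,
      ← Matrix.star_eq_conjTranspose, Matrix.mul_assoc]
  refine ⟨U * diagonal (fun i => (d i)⁻¹) * star U, ?_, ?_, ?_, ?_⟩
  · have hfun : (fun i => d i * (d i)⁻¹ * d i) = d := by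
      funext i
      rcases eq_or_ne (d i) 0 with h | h
      · simp [h]
      · field_simp
    rw [hspec, key, key, hfun, Matrix.mul_assoc]
  · have hfun : (fun i => (d i)⁻¹ * d i * (d i)⁻¹) = fun i => (d i)⁻¹ := by
      funext i
      rcases eq_or_ne (d i) 0 with h | h
      · simp [h]
      · field_simp
    rw [hspec, key, key, hfun, Matrix.mul_assoc]
  · rw [hspec, key]
    apply herm
    funext i
    simp [Pi.mul_apply, star_mul', star_inv₀, hstard i, mul_comm]
  · rw [hspec, key]
    apply herm
    funext i
    simp [Pi.mul_apply, star_mul', star_inv₀, hstard i, mul_comm]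

lemma pinv_penrose {n : Type*} [Fintype n] [DecidableEq n] {A : Matrix n n ℂ}
    (hA : A.IsHermitian) :
    A * pinv A * A = A ∧ pinv A * A * pinv A = pinv A ∧
      (A * pinv A)ᴴ = A * pinv A ∧ (pinv A * A)ᴴ = pinv A * A := by
  have h := exists_penrose hA
  rw [pinv, dif_pos h]
  exact h.choose_spec

/-- For `R ⪰ 0` and `σ ≻ 0`,
`yᴴ (R + diag σ)⁻¹ y = min_{z ∈ range R} zᴴ R⁺ z + (y−z)ᴴ diag(σ)⁻¹ (y−z)`. -/
theorem quadform_inv_add_diag_eq_min {M : ℕ}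
    (R : Matrix (Fin M) (Fin M) ℂ) (hR : R.PosSemidef)
    (σ : Fin M → ℝ) (hσ : ∀ i, 0 < σ i) (y : Fin M → ℂ)
    (hy : ∃ w, (R + Matrix.diagonal fun i => (σ i : ℂ)).mulVec w = y) :
    IsLeast {t : ℝ | ∃ z : Fin M → ℂ, (∃ w, R.mulVec w = z) ∧
        t = (star z ⬝ᵥ (pinv R).mulVec z).re +
          (star (y - z) ⬝ᵥ (Matrix.diagonal fun i => (σ i : ℂ))⁻¹.mulVec (y - z)).re}
      ((star y ⬝ᵥ (R + Matrix.diagonal fun i => (σ i : ℂ))⁻¹.mulVec y).re) := by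
  obtain ⟨w, hw⟩ := hy
  set D : Matrix (Fin M) (Fin M) ℂ := Matrix.diagonal fun i => (σ i : ℂ) with hDdef
  have hRH : Rᴴ = R := hR.1
  obtain ⟨hP1, hP2, hP3, hP4⟩ := pinv_penrose hR.1
  have hDpd : D.PosDef := by
    rw [hDdef, Matrix.posDef_diagonal_iff]
    intro i
    exact_mod_cast hσ i
  have hDH : Dᴴ = D := hDpd.isHermitian
  have hDdet : IsUnit D.det := (Matrix.isUnit_iff_isUnit_det _).mp hDpd.isUnit
  have hS : (R + D).PosDef := Matrix.PosDef.posSemidef_add hR hDpd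
  have hSH : (R + D)ᴴ = R + D := hS.isHermitian
  have hSdet : IsUnit (R + D).det := (Matrix.isUnit_iff_isUnit_det _).mp hS.isUnit
  -- generic star-mulVec move
  have hstar : ∀ (A : Matrix (Fin M) (Fin M) ℂ) (v u : Fin M → ℂ),
      star (A *ᵥ v) ⬝ᵥ u = star v ⬝ᵥ (Aᴴ *ᵥ u) := by
    intro A v u
    rw [star_mulVec, ← dotProduct_mulVec]
  -- key pinv identity
  have hA1 : ∀ v u : Fin M → ℂ,
      star (R *ᵥ v) ⬝ᵥ (pinv R *ᵥ (R *ᵥ u)) = star v ⬝ᵥ (R *ᵥ u) := by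
    intro v u
    rw [hstar, mulVec_mulVec, mulVec_mulVec, hRH, hP1]
  -- key D identities
  have hC1 : ∀ (v m : Fin M → ℂ), star (D *ᵥ v) ⬝ᵥ (D⁻¹ *ᵥ m) = star v ⬝ᵥ m := by
    intro v m
    rw [hstar, mulVec_mulVec, hDH, Matrix.mul_nonsing_inv _ hDdet, one_mulVec]
  have hC2 : ∀ v : Fin M → ℂ, D⁻¹ *ᵥ (D *ᵥ v) = v := by
    intro v
    rw [mulVec_mulVec, Matrix.nonsing_inv_mul _ hDdet, one_mulVec]
  have hRstar : ∀ v u : Fin M → ℂ, star (R *ᵥ v) ⬝ᵥ u = star v ⬝ᵥ (R *ᵥ u) := by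
    intro v u
    rw [hstar, hRH]
  -- the target value
  have hyval : star y ⬝ᵥ (R + D)⁻¹ *ᵥ y = star w ⬝ᵥ ((R + D) *ᵥ w) := by
    conv_lhs => rw [← hw]
    rw [mulVec_mulVec, Matrix.nonsing_inv_mul _ hSdet, one_mulVec, hstar, hSH]
  have hyz0 : y - R *ᵥ w = D *ᵥ w := by
    rw [← hw, add_mulVec]
    abel
  constructor
  · -- membership: take z = R *ᵥ w
    refine ⟨R *ᵥ w, ⟨w, rfl⟩, ?_⟩
    rw [hyval, hyz0, hA1, hC1]
    rw [add_mulVec, dotProduct_add, Complex.add_re]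
  · -- lower bound
    rintro t ⟨z, ⟨u, hu⟩, ht⟩
    set a := u - w with ha
    have hz : z = R *ᵥ w + R *ᵥ a := by
      rw [← hu, ha, mulVec_sub]
      abel
    have hyz : y - z = D *ᵥ w - R *ᵥ a := by
      rw [hz, ← sub_sub, hyz0]
    have e1 : star z ⬝ᵥ pinv R *ᵥ z
        = star w ⬝ᵥ (R *ᵥ w) + star w ⬝ᵥ (R *ᵥ a) + star a ⬝ᵥ (R *ᵥ w)
          + star a ⬝ᵥ (R *ᵥ a) := by
      rw [hz]
      simp only [star_add, mulVec_add, dotProduct_add, add_dotProduct, hA1]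
      ring
    have e2 : star (y - z) ⬝ᵥ D⁻¹ *ᵥ (y - z)
        = star w ⬝ᵥ (D *ᵥ w) - star w ⬝ᵥ (R *ᵥ a) - star a ⬝ᵥ (R *ᵥ w)
          + star (R *ᵥ a) ⬝ᵥ (D⁻¹ *ᵥ (R *ᵥ a)) := by
      rw [hyz, star_sub, sub_dotProduct, mulVec_sub, dotProduct_sub, dotProduct_sub]
      simp only [hC1]
      rw [hC2, hRstar a w]
      ring
    have key : star z ⬝ᵥ pinv R *ᵥ z + star (y - z) ⬝ᵥ D⁻¹ *ᵥ (y - z)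
        = star w ⬝ᵥ ((R + D) *ᵥ w) + star a ⬝ᵥ (R *ᵥ a)
          + star (R *ᵥ a) ⬝ᵥ (D⁻¹ *ᵥ (R *ᵥ a)) := by
      rw [e1, e2, add_mulVec, dotProduct_add]
      ring
    have h1 : 0 ≤ (star a ⬝ᵥ (R *ᵥ a)).re := by
      have := hR.dotProduct_mulVec_nonneg a
      exact_mod_cast (Complex.le_def.mp this).1
    have h2 : 0 ≤ (star (R *ᵥ a) ⬝ᵥ (D⁻¹ *ᵥ (R *ᵥ a))).re := by
      have := hDpd.inv.posSemidef.dotProduct_mulVec_nonneg (R *ᵥ a)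
      exact_mod_cast (Complex.le_def.mp this).1
    have : t = (star w ⬝ᵥ ((R + D) *ᵥ w)).re + (star a ⬝ᵥ (R *ᵥ a)).re
        + (star (R *ᵥ a) ⬝ᵥ (D⁻¹ *ᵥ (R *ᵥ a))).re := by
      rw [ht, ← Complex.add_re, key, Complex.add_re, Complex.add_re]
    rw [this, hyval]
    linarith
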